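/- Let z be a real random variable distributed as a Gaussian N(μ, σ²) with mean μ ∈ ℝ and variance σ² > 0. Then E[erf(z)] = erf(μ / √(1 + 2σ²)). -/

import Mathlib

open MeasureTheory ProbabilityTheory

/-- The Gauss error function `erf(z) = ∫_0^z (2/√π) exp(-t²) dt`. -/
noncomputable def erf (z : ℝ) : ℝ :=
  ∫ t in (0 : ℝ)..z, 2 / Real.sqrt Real.pi * Real.exp (-t ^ 2)

namespace ErfGaussAux

open Real Set

noncomputable def f (t : ℝ) : ℝ := 2 / Real.sqrt Real.pi * Real.exp (-t ^ 2)

lemma f_nonneg (t : ℝ) : 0 ≤ f t := by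
  unfold f; positivity

lemma f_sub_comm (s u : ℝ) : f (s - u) = f (u - s) := by
  unfold f; ring_nf

lemma integrable_f : Integrable f := by
  have h := (integrable_exp_neg_mul_sq (one_pos)).const_mul (2 / Real.sqrt π)
  unfold f; simpa using h

lemma continuous_f : Continuous f := by
  unfold f; fun_prop

lemma integral_f_Ioi : ∫ t in Ioi (0:ℝ), f t = 1 := by
  unfold f
  rw [MeasureTheory.integral_const_mul]
  have : ∫ t in Ioi (0:ℝ), Real.exp (-t ^ 2) = Real.sqrt (π / 1) / 2 := by
    simpa using integral_gaussian_Ioi 1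
  rw [this]
  have hπ : Real.sqrt π ≠ 0 := by positivity
  rw [div_one]
  field_simp

/-- The "CDF-like" primitive of `f`. -/
noncomputable def F (x : ℝ) : ℝ := ∫ t in Iic x, f t

lemma F_zero : F 0 = 1 := by
  unfold F
  have h1 : ∫ t in Iic (0:ℝ), f t = ∫ t in Iic (0:ℝ), f (-t) := by
    refine setIntegral_congr_fun measurableSet_Iic fun t _ => ?_
    unfold f; ring_nf
  rw [h1, integral_comp_neg_Iic, neg_zero, ← integral_f_Ioi]

lemma erf_eq (x : ℝ) : erf x = F x - 1 := by
  have h := intervalIntegral.integral_Iic_sub_Iic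
    (μ := volume) (f := f) (integrable_f.integrableOn (s := Iic 0))
    (integrable_f.integrableOn (s := Iic x))
  show (∫ t in (0:ℝ)..x, f t) = F x - 1
  have h0 : (∫ t in Iic (0:ℝ), f t) = 1 := F_zero
  rw [← h, h0, F]

lemma F_eq (x : ℝ) : F x = 1 + erf x := by rw [erf_eq]; ring

lemma F_nonneg (x : ℝ) : 0 ≤ F x :=
  setIntegral_nonneg measurableSet_Iic fun t _ => f_nonneg t

lemma integral_f : ∫ t, f t = 2 := by
  have h1 : ∫ t, f t = ∫ t, f |t| := by
    congr 1; funext t; unfold f; rw [sq_abs]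
  rw [h1, integral_comp_abs, integral_f_Ioi]; norm_num

lemma F_le_two (x : ℝ) : F x ≤ 2 := by
  rw [← integral_f]
  exact setIntegral_le_integral integrable_f (Filter.Eventually.of_forall f_nonneg)

/-- Affine change of variables for set integrals. -/
lemma setIntegral_comp_affine (g : ℝ → ℝ) {a : ℝ} (ha : a ≠ 0) (b : ℝ) (s : Set ℝ) :
    ∫ x in (fun x => a * x + b) ⁻¹' s, g (a * x + b) = |a|⁻¹ * ∫ y in s, g y := by
  have e : MeasurableEmbedding (fun x : ℝ => a * x + b) := by
    have : Continuous (fun x : ℝ => a * x + b) := by fun_prop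
    exact (Homeomorph.trans (Homeomorph.mulLeft₀ a ha)
      (Homeomorph.addRight b)).isClosedEmbedding.measurableEmbedding
  have hmap : Measure.map (fun x : ℝ => a * x + b) volume
      = ENNReal.ofReal |a⁻¹| • volume := by
    have hcomp : (fun x : ℝ => a * x + b) = (fun y : ℝ => y + b) ∘ (fun x : ℝ => a * x) := rfl
    rw [hcomp, ← Measure.map_map (measurable_add_const b) (measurable_const_mul a),
      Real.map_volume_mul_left ha, Measure.map_smul, map_add_right_eq_self volume b]
  have h := MeasurableEmbedding.setIntegral_map (μ := volume) e g s
  rw [hmap, Measure.restrict_smul, integral_smul_measure] at h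
  rw [← h]
  simp [ENNReal.toReal_ofReal (abs_nonneg a⁻¹), abs_inv]

lemma F_rep (s : ℝ) : F s = ∫ u in Ioi (0:ℝ), f (s - u) := by
  have hpre : (fun x : ℝ => (-1) * x + s) ⁻¹' (Iio s) = Ioi 0 := by
    ext x
    simp only [mem_preimage, mem_Iio, mem_Ioi]
    constructor <;> intro h <;> linarith
  have h := setIntegral_comp_affine f (a := -1) (by norm_num) s (Iio s)
  rw [hpre] at h
  have h2 : ∀ x : ℝ, (-1) * x + s = s - x := fun x => by ring
  simp only [h2] at h
  rw [F, integral_Iic_eq_integral_Iio]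
  rw [h]; norm_num

lemma conv_gauss (μ v : ℝ) (hv : 0 < v) (u : ℝ) :
    ∫ s, gaussianPDFReal μ ⟨v, hv.le⟩ s * f (s - u)
      = 2 / (Real.sqrt π * Real.sqrt (1 + 2*v)) * Real.exp (-(u - μ)^2 / (1 + 2*v)) := by
  have hV : (0:ℝ) < 1 + 2*v := by linarith
  have hVne : (1 + 2*v : ℝ) ≠ 0 := hV.ne'
  set a : ℝ := (1+2*v) / (2*v) with ha_def
  have ha : 0 < a := by positivity
  set c : ℝ := (μ + 2*v*u) / (1+2*v) with hc_def
  have key : ∀ s, gaussianPDFReal μ ⟨v, hv.le⟩ s * f (s - u)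
      = ((Real.sqrt (2*π*v))⁻¹ * (2 / Real.sqrt π) * Real.exp (-(u - μ)^2/(1+2*v)))
        * Real.exp (-(a * (s - c)^2)) := by
    intro s
    have hexp : Real.exp (-(s-μ)^2/(2*↑(⟨v, hv.le⟩ : NNReal)))
          * Real.exp (-(s-u)^2)
        = Real.exp (-(u-μ)^2/(1+2*v)) * Real.exp (-(a * (s - c)^2)) := by
      rw [← Real.exp_add, ← Real.exp_add]
      congr 1
      simp only [NNReal.coe_mk, ha_def, hc_def]
      field_simp
      ring
    unfold gaussianPDFReal
    unfold f
    calc (√(2 * π * ↑(⟨v, hv.le⟩ : NNReal)))⁻¹ * rexp (-(s - μ) ^ 2 / (2 * ↑(⟨v, hv.le⟩ : NNReal)))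
          * (2 / √π * rexp (-(s-u) ^ 2))
        = (√(2 * π * ↑(⟨v, hv.le⟩ : NNReal)))⁻¹ * (2 / √π)
          * (rexp (-(s - μ) ^ 2 / (2 * ↑(⟨v, hv.le⟩ : NNReal))) * rexp (-(s-u) ^ 2)) := by ring
      _ = _ := by rw [hexp]; simp only [NNReal.coe_mk]; ring
  simp_rw [key]
  rw [MeasureTheory.integral_const_mul]
  have hgauss : (∫ s : ℝ, Real.exp (-(a * (s - c)^2))) = Real.sqrt (π / a) := by
    rw [show (fun s : ℝ => Real.exp (-(a * (s - c)^2)))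
        = (fun s : ℝ => Real.exp (-(a * s^2))) ∘ (fun s : ℝ => s - c) from rfl]
    rw [show ((fun s : ℝ => Real.exp (-(a * s^2))) ∘ (fun s : ℝ => s - c))
        = fun s : ℝ => (fun t : ℝ => Real.exp (-(a * t^2))) (s - c) from rfl]
    rw [integral_sub_right_eq_self (fun t : ℝ => Real.exp (-(a * t^2))) c]
    simpa [neg_mul] using integral_gaussian a
  rw [hgauss]
  have h1 : π / a = (2*π*v)/(1+2*v) := by
    rw [ha_def]; field_simp
  have h2 : √(π / a) = √(2*π*↑(⟨v, hv.le⟩ : NNReal)) / √(1+2*v) := by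
    rw [h1, Real.sqrt_div (by positivity)]
  rw [h2]
  have hne1 : √(2*π*↑(⟨v, hv.le⟩ : NNReal)) ≠ 0 := by
    simp only [NNReal.coe_mk]; positivity
  have hne2 : √π ≠ 0 := by positivity
  have hne3 : √(1+2*v) ≠ 0 := by positivity
  field_simp

lemma final_subst (μ V : ℝ) (hV : 0 < V) :
    ∫ u in Ioi (0:ℝ), Real.exp (-(u-μ)^2/V)
      = Real.sqrt V * ∫ r in Iic (μ / Real.sqrt V), Real.exp (-r^2) := by
  have hs : (0:ℝ) < Real.sqrt V := Real.sqrt_pos.mpr hV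
  have hpre : (fun x : ℝ => (-Real.sqrt V) * x + μ) ⁻¹' (Ioi 0) = Iio (μ / Real.sqrt V) := by
    ext x
    simp only [mem_preimage, mem_Ioi, mem_Iio]
    rw [lt_div_iff₀ hs]
    constructor <;> intro h <;> nlinarith
  have h := setIntegral_comp_affine (fun y => Real.exp (-(y-μ)^2/V))
    (a := -Real.sqrt V) (by simpa using hs.ne') μ (Ioi 0)
  rw [hpre] at h
  have hint : ∀ x : ℝ, -((-Real.sqrt V) * x + μ - μ)^2/V = -x^2 := by
    intro x
    have : ((-Real.sqrt V) * x + μ - μ)^2 = V * x^2 := by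
      have hsq : (Real.sqrt V)^2 = V := Real.sq_sqrt hV.le
      nlinarith [hsq]
    rw [this]
    field_simp
  simp only [hint] at h
  rw [integral_Iic_eq_integral_Iio, h]
  rw [abs_neg, abs_of_nonneg (Real.sqrt_nonneg V)]
  field_simp

end ErfGaussAux

open ErfGaussAux Set in
/-- If `z ∼ N(μ, σ²)` with `σ² > 0`, then `E[erf(z)] = erf(μ / √(1 + 2σ²))`. -/
theorem expectation_erf_gaussian (μ : ℝ) (σ2 : ℝ) (hσ2 : 0 < σ2) :
    ∫ z, erf z ∂(gaussianReal μ ⟨σ2, hσ2.le⟩) =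
      erf (μ / Real.sqrt (1 + 2 * σ2)) := by
  have hσ : ((⟨σ2, hσ2.le⟩ : NNReal)) ≠ 0 := by
    intro h
    exact hσ2.ne' (congrArg NNReal.toReal h)
  set p : ℝ → ℝ := gaussianPDFReal μ ⟨σ2, hσ2.le⟩ with hp
  have hp_nonneg : ∀ x, 0 ≤ p x := fun x => gaussianPDFReal_nonneg _ _ _
  have hIntp : Integrable p := integrable_gaussianPDFReal _ _
  -- Step 1: reduce to a Lebesgue integral
  have h1 : ∫ z, erf z ∂(gaussianReal μ ⟨σ2, hσ2.le⟩) = ∫ z, p z * erf z := by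
    rw [gaussianReal_of_var_ne_zero _ hσ]
    have hPDF : gaussianPDF μ ⟨σ2, hσ2.le⟩ = fun x => (((p x).toNNReal : NNReal) : ENNReal) := rfl
    rw [hPDF, integral_withDensity_eq_integral_smul
      ((measurable_gaussianPDFReal μ ⟨σ2, hσ2.le⟩).real_toNNReal)]
    congr 1
    funext z
    rw [NNReal.smul_def, Real.coe_toNNReal _ (hp_nonneg z), smul_eq_mul]
  -- continuity of erf and F
  have hcont_erf : Continuous erf := by
    have hii : ∀ a b : ℝ, IntervalIntegrable f volume a b := fun a b =>
      integrable_f.intervalIntegrable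
    have hc := intervalIntegral.continuous_primitive hii 0
    exact hc
  have hcontF : Continuous F := by
    have : F = fun x => 1 + erf x := funext F_eq
    rw [this]
    exact continuous_const.add hcont_erf
  have hIntpF : Integrable (fun s => p s * F s) := by
    have h := hIntp.bdd_mul hcontF.aestronglyMeasurable
      (c := 2) (Filter.Eventually.of_forall fun x => by
        rw [Real.norm_eq_abs, abs_of_nonneg (F_nonneg x)]; exact F_le_two x)
    simpa [mul_comm] using h
  -- Step 2
  have key2 : ∫ z, p z * erf z = (∫ z, p z * F z) - 1 := by
    have hz : ∀ z, p z * erf z = p z * F z - p z := fun z => by rw [erf_eq]; ring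
    simp_rw [hz]
    rw [integral_sub hIntpF hIntp, integral_gaussianPDFReal_eq_one μ hσ]
  -- Fubini
  have hmeas : Measurable (Function.uncurry fun s u : ℝ => p s * f (s - u)) := by
    have : Function.uncurry (fun s u : ℝ => p s * f (s - u))
        = fun q : ℝ × ℝ => p q.1 * f (q.1 - q.2) := rfl
    rw [this]
    exact ((measurable_gaussianPDFReal _ _).comp measurable_fst).mul
      (continuous_f.measurable.comp (measurable_fst.sub measurable_snd))
  have hprod : Integrable (Function.uncurry fun s u : ℝ => p s * f (s - u))
      ((volume : Measure ℝ).prod (volume.restrict (Ioi 0))) := by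
    rw [integrable_prod_iff hmeas.aestronglyMeasurable]
    constructor
    · refine Filter.Eventually.of_forall fun s => ?_
      have hfe : (fun u : ℝ => f (s - u)) = fun u : ℝ => f (u - s) :=
        funext fun u => f_sub_comm s u
      have hint : Integrable (fun u : ℝ => f (s - u)) := by
        rw [hfe]; exact integrable_f.comp_sub_right s
      exact (hint.const_mul (p s)).integrableOn
    · have heq : (fun s => ∫ u in Ioi (0:ℝ), ‖p s * f (s - u)‖) = fun s => p s * F s := by
        funext s
        have hnn : ∀ u : ℝ, ‖p s * f (s - u)‖ = p s * f (s - u) := fun u =>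
          Real.norm_of_nonneg (mul_nonneg (hp_nonneg s) (f_nonneg _))
        simp_rw [hnn]
        rw [MeasureTheory.integral_const_mul, ← F_rep]
      simp only [Function.uncurry_apply_pair]
      rw [heq]
      exact hIntpF
  have key3 : ∫ s, p s * F s = ∫ u in Ioi (0:ℝ), ∫ s, p s * f (s - u) := by
    have hrep : ∀ s, p s * F s = ∫ u in Ioi (0:ℝ), p s * f (s - u) := fun s => by
      rw [F_rep, MeasureTheory.integral_const_mul]
    simp_rw [hrep]
    exact integral_integral_swap hprod
  have key4 : ∀ u : ℝ, (∫ s, p s * f (s - u))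
      = 2 / (Real.sqrt Real.pi * Real.sqrt (1 + 2*σ2))
        * Real.exp (-(u - μ)^2 / (1 + 2*σ2)) := fun u => conv_gauss μ σ2 hσ2 u
  have hV : (0:ℝ) < 1 + 2*σ2 := by linarith
  rw [h1, key2, key3]
  simp_rw [key4]
  rw [MeasureTheory.integral_const_mul, final_subst μ (1 + 2*σ2) hV]
  have hfinal : (2:ℝ) / (Real.sqrt Real.pi * Real.sqrt (1 + 2*σ2))
      * (Real.sqrt (1 + 2*σ2) * ∫ r in Iic (μ / Real.sqrt (1 + 2*σ2)), Real.exp (-r^2))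
      = F (μ / Real.sqrt (1 + 2*σ2)) := by
    rw [F]
    unfold f
    rw [MeasureTheory.integral_const_mul]
    have hne2 : Real.sqrt Real.pi ≠ 0 := by positivity
    have hne3 : Real.sqrt (1 + 2*σ2) ≠ 0 := by positivity
    field_simp
  rw [hfinal, F_eq]
  ring
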